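/- Fix ε > 0 and δ ≥ 0. Let X, Y, Z be finite-dimensional real vector spaces equipped with seminorm families (p_k)_{k<l}, (q_k)_{k<m}, (r_k)_{k<m'} respectively, where 1 ≤ l ≤ m ≤ m' < ω, and let f : X → Y and g : X → Z be multi-δ-isometric embeddings. Then there exist a finite-dimensional real vector space W equipped with a finite separating seminorm family (s_k)_{k<m''} with m'' ≥ m', and injective linear maps i : Y → W and j : Z → W, such that s_k(i(y)) = q_k(y) for all y ∈ Y and k < m, s_k(j(z)) = r_k(z) for all z ∈ Z and k < m', and for every k < l and every x ∈ X with p_k(x) ≤ 1 one has s_k(i(f(x)) − j(g(x))) ≤ 2δ + ε. Moreover, if the seminorm families of X, Y and Z are nondecreasing (graded), then W and its family (s_k) can be chosen so that (s_k) is nondecreasing. -/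

import Mathlib

open Finset in
lemma seminorm_finset_sum_apply {V ι : Type*} [AddCommGroup V] [Module ℝ V]
    (P : ι → Seminorm ℝ V) (s : Finset ι) (v : V) :
    (∑ i ∈ s, P i) v = ∑ i ∈ s, P i v := by
  classical
  induction s using Finset.cons_induction with
  | empty => simp
  | cons a s ha ih => rw [Finset.sum_cons, Finset.sum_cons, Seminorm.add_apply, ih]

lemma seminorm_map_sum_le {V ι : Type*} [AddCommGroup V] [Module ℝ V]
    (S : Seminorm ℝ V) (s : Finset ι) (v : ι → V) :
    S (∑ i ∈ s, v i) ≤ ∑ i ∈ s, S (v i) := by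
  classical
  induction s using Finset.cons_induction with
  | empty => simp
  | cons a s ha ih =>
    rw [Finset.sum_cons, Finset.sum_cons]
    exact (map_add_le_add S _ _).trans (add_le_add le_rfl ih)

lemma exists_dominating_norm (V : Type*) [AddCommGroup V] [Module ℝ V]
    [FiniteDimensional ℝ V] :
    ∃ N : Seminorm ℝ V, (∀ v : V, v ≠ 0 → 0 < N v) ∧
      ∀ S : Seminorm ℝ V, ∃ C : ℝ, 0 ≤ C ∧ ∀ v, S v ≤ C * N v := by
  classical
  set n := Module.finrank ℝ V with hn
  set b : Module.Basis (Fin n) ℝ V := Module.finBasis ℝ V with hb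
  refine ⟨(normSeminorm ℝ (Fin n → ℝ)).comp b.equivFun.toLinearMap, ?_, ?_⟩
  · intro v hv
    have : b.equivFun v ≠ 0 := by
      simpa using (LinearEquiv.map_ne_zero_iff b.equivFun).mpr hv
    simpa [Seminorm.comp_apply, coe_normSeminorm] using norm_pos_iff.mpr this
  · intro S
    refine ⟨∑ i, S (b i), Finset.sum_nonneg fun i _ => apply_nonneg _ _, fun v => ?_⟩
    have h1 : S v ≤ ∑ i, ‖b.equivFun v i‖ * S (b i) := by
      calc S v = S (∑ i, b.equivFun v i • b i) := by rw [b.sum_equivFun]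
        _ ≤ ∑ i, S (b.equivFun v i • b i) := seminorm_map_sum_le S _ _
        _ = ∑ i, ‖b.equivFun v i‖ * S (b i) := by
            simp [map_smul_eq_mul]
    refine h1.trans ?_
    have h2 : ∑ i, ‖b.equivFun v i‖ * S (b i) ≤ ∑ i, ‖b.equivFun v‖ * S (b i) :=
      Finset.sum_le_sum fun i _ =>
        mul_le_mul_of_nonneg_right (norm_le_pi_norm _ i) (apply_nonneg _ _)
    refine h2.trans ?_
    rw [← Finset.mul_sum, mul_comm]
    simp [Seminorm.comp_apply, coe_normSeminorm]

/-- A real vector space equipped with an `ℕ`-indexed family of seminorms (of which an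
initial segment will be regarded as the relevant seminorm family). -/
structure MultiSemiSpace where
  carrier : Type
  [grp : AddCommGroup carrier]
  [mod : Module ℝ carrier]
  sem : ℕ → Seminorm ℝ carrier

attribute [instance] MultiSemiSpace.grp MultiSemiSpace.mod

set_option maxHeartbeats 1000000 in
/-- near amalgamation with modulus `2δ` for finite-dimensional
multi-seminormed spaces of finite lengths `l ≤ m ≤ m'`, with a separated amalgam,
which can moreover be chosen graded when the given spaces are graded. -/
theorem stmt_3 {X Y Z : Type*} [AddCommGroup X] [Module ℝ X] [AddCommGroup Y] [Module ℝ Y]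
    [AddCommGroup Z] [Module ℝ Z]
    [FiniteDimensional ℝ X] [FiniteDimensional ℝ Y] [FiniteDimensional ℝ Z]
    (ε δ : ℝ) (hε : 0 < ε) (hδ : 0 ≤ δ)
    (l m m' : ℕ) (hl : 1 ≤ l) (hlm : l ≤ m) (hmm' : m ≤ m')
    (p : ℕ → Seminorm ℝ X) (q : ℕ → Seminorm ℝ Y) (r : ℕ → Seminorm ℝ Z)
    (f : X →ₗ[ℝ] Y) (hfinj : Function.Injective f)
    (hf : ∀ k < l, ∀ x, (1 + δ)⁻¹ * p k x ≤ q k (f x) ∧ q k (f x) ≤ (1 + δ) * p k x)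
    (g : X →ₗ[ℝ] Z) (hginj : Function.Injective g)
    (hg : ∀ k < l, ∀ x, (1 + δ)⁻¹ * p k x ≤ r k (g x) ∧ r k (g x) ≤ (1 + δ) * p k x) :
    ∃ (W : MultiSemiSpace) (m'' : ℕ), FiniteDimensional ℝ W.carrier ∧ m' ≤ m'' ∧
      (∀ w : W.carrier, w ≠ 0 → ∃ k < m'', W.sem k w ≠ 0) ∧
      ∃ (i : Y →ₗ[ℝ] W.carrier) (j : Z →ₗ[ℝ] W.carrier),
        Function.Injective i ∧ Function.Injective j ∧
        (∀ k < m, ∀ y, W.sem k (i y) = q k y) ∧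
        (∀ k < m', ∀ z, W.sem k (j z) = r k z) ∧
        (∀ k < l, ∀ x, p k x ≤ 1 → W.sem k (i (f x) - j (g x)) ≤ 2 * δ + ε) ∧
        (((∀ k, k + 1 < l → ∀ x, p k x ≤ p (k + 1) x) ∧
            (∀ k, k + 1 < m → ∀ y, q k y ≤ q (k + 1) y) ∧
            (∀ k, k + 1 < m' → ∀ z, r k z ≤ r (k + 1) z)) →
          ∀ k, k + 1 < m'' → ∀ w, W.sem k w ≤ W.sem (k + 1) w) := by
  classical
  have h1δ : (0:ℝ) < 1 + δ := by linarith
  obtain ⟨c, hc_def⟩ : ∃ c : ℝ, c = 2 * δ + ε := ⟨_, rfl⟩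
  have hc0 : 0 ≤ c := by rw [hc_def]; linarith
  have hkey : 1 + δ ≤ (1 + δ)⁻¹ + c := by
    have hi : (1 + δ) * (1 + δ)⁻¹ = 1 := mul_inv_cancel₀ (ne_of_gt h1δ)
    have hinv : 0 ≤ (1 + δ)⁻¹ := inv_nonneg.mpr h1δ.le
    rw [hc_def]
    nlinarith [sq_nonneg δ]
  have hm1 : 1 ≤ m := hl.trans hlm
  -- the amalgam and its structure maps
  set D : X →ₗ[ℝ] Y × Z := LinearMap.prod f (-g) with hD_def
  have hD : ∀ x, D x = (f x, -(g x)) := fun x => rfl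
  have hDker : LinearMap.ker D = ⊥ := by
    rw [LinearMap.ker_eq_bot]
    intro a b h
    exact hfinj (congrArg Prod.fst h)
  obtain ⟨π, hπ⟩ := D.exists_leftInverse_of_injective hDker
  have hπD : ∀ x, π (D x) = x := fun x => by
    have := LinearMap.congr_fun hπ x
    simpa using this
  obtain ⟨N, hNpos, hNdom⟩ := exists_dominating_norm (Y × Z)
  set A : ℕ → Seminorm ℝ (Y × Z) := fun k =>
    (q k).comp (LinearMap.fst ℝ Y Z) + (r k).comp (LinearMap.snd ℝ Y Z) with hA_def
  have hA : ∀ k (w : Y × Z), A k w = q k w.1 + r k w.2 := fun k w => rfl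
  set T : Seminorm ℝ (Y × Z) :=
    (∑ k ∈ Finset.range m, (q k).comp (LinearMap.fst ℝ Y Z)) +
      (∑ k ∈ Finset.range m', (r k).comp (LinearMap.snd ℝ Y Z)) with hT_def
  have hT : ∀ j, j < m → ∀ j', j' < m' → ∀ w : Y × Z, q j w.1 + r j' w.2 ≤ T w := by
    intro j hj j' hj' w
    have h1 : ((q j).comp (LinearMap.fst ℝ Y Z)) w
        ≤ (∑ k ∈ Finset.range m, (q k).comp (LinearMap.fst ℝ Y Z)) w := by
      rw [seminorm_finset_sum_apply]
      exact Finset.single_le_sum (f := fun k => ((q k).comp (LinearMap.fst ℝ Y Z)) w)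
        (fun i _ => apply_nonneg _ _) (Finset.mem_range.2 hj)
    have h2 : ((r j').comp (LinearMap.snd ℝ Y Z)) w
        ≤ (∑ k ∈ Finset.range m', (r k).comp (LinearMap.snd ℝ Y Z)) w := by
      rw [seminorm_finset_sum_apply]
      exact Finset.single_le_sum (f := fun k => ((r k).comp (LinearMap.snd ℝ Y Z)) w)
        (fun i _ => apply_nonneg _ _) (Finset.mem_range.2 hj')
    exact add_le_add h1 h2
  obtain ⟨K, hK0, hKb⟩ := hNdom T
  set B : ℕ → Seminorm ℝ (Y × Z) := fun k =>
    c.toNNReal • (p k).comp π +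
      K.toNNReal • N.comp (LinearMap.id - D.comp π) with hB_def
  have hB : ∀ k (u : Y × Z), B k u = c * p k (π u) + K * N (u - D (π u)) := by
    intro k u
    simp [hB_def, Seminorm.add_apply, Seminorm.smul_apply, Seminorm.comp_apply,
      NNReal.smul_def, LinearMap.sub_apply, LinearMap.comp_apply, LinearMap.id_apply,
      smul_eq_mul, Real.coe_toNNReal c hc0, Real.coe_toNNReal K hK0]
  set G : ℕ → Seminorm ℝ Y := fun k => q (min k (m - 1)) with hG_def
  set sFam : ℕ → Seminorm ℝ (Y × Z) := fun k =>
    if k < l then B k ⊓ A k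
    else if k < m' then
      (G k).comp (LinearMap.fst ℝ Y Z) + (r k).comp (LinearMap.snd ℝ Y Z)
    else (K.toNNReal + 1) • N with hs_def
  have hs1 : ∀ k, k < l → sFam k = B k ⊓ A k := by
    intro k hk; simp only [hs_def]; rw [if_pos hk]
  have hs2 : ∀ k, l ≤ k → k < m' → sFam k =
      (G k).comp (LinearMap.fst ℝ Y Z) + (r k).comp (LinearMap.snd ℝ Y Z) := by
    intro k hk hk'; simp only [hs_def]; rw [if_neg (by omega), if_pos hk']
  have hs3 : ∀ k, m' ≤ k → sFam k = (K.toNNReal + 1) • N := by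
    intro k hk; simp only [hs_def]; rw [if_neg (by omega), if_neg (by omega)]
  have hinfA : ∀ k (w : Y × Z), (B k ⊓ A k) w ≤ A k w := by
    intro k w
    rw [Seminorm.inf_apply]
    refine ciInf_le_of_le Seminorm.bddBelow_range_add 0 ?_
    simp
  have hinfB : ∀ k (w : Y × Z), (B k ⊓ A k) w ≤ B k w := by
    intro k w
    rw [Seminorm.inf_apply]
    refine ciInf_le_of_le Seminorm.bddBelow_range_add w ?_
    simp
  have hABT : ∀ k, k < l → ∀ w : Y × Z, A k w ≤ T w := by
    intro k hk w
    rw [hA]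
    exact hT k (by omega) k (by omega) w
  have hTop : ∀ k, k < m' → ∀ w : Y × Z, sFam k w ≤ K * N w := by
    intro k hk w
    by_cases hkl : k < l
    · rw [hs1 k hkl]
      exact ((hinfA k w).trans (hABT k hkl w)).trans (hKb w)
    · rw [hs2 k (by omega) hk]
      refine le_trans ?_ (hKb w)
      have hmin : min k (m - 1) < m := by omega
      have : q (min k (m - 1)) w.1 + r k w.2 ≤ T w := hT _ hmin k hk w
      simpa [hG_def, Seminorm.add_apply, Seminorm.comp_apply] using this
  -- the key inf-convolution estimate
  have haux : ∀ k, k < l → ∀ w u : Y × Z,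
      c * p k (π u) + (q k (w.1 - f (π u)) + r k (w.2 + g (π u))) ≤ B k u + A k (w - u) := by
    intro k hk w u
    have hAvK : A k (u - D (π u)) ≤ K * N (u - D (π u)) :=
      (hABT k hk _).trans (hKb _)
    rw [hA] at hAvK
    have h1 : q k (w.1 - f (π u)) ≤ q k (w.1 - u.1) + q k ((u - D (π u)).1) := by
      have e : w.1 - f (π u) = (w.1 - u.1) + (u - D (π u)).1 := by
        rw [hD (π u)]
        simp only [Prod.fst_sub]
        abel
      rw [e]; exact map_add_le_add _ _ _
    have h2 : r k (w.2 + g (π u)) ≤ r k (w.2 - u.2) + r k ((u - D (π u)).2) := by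
      have e : w.2 + g (π u) = (w.2 - u.2) + (u - D (π u)).2 := by
        rw [hD (π u)]
        simp only [Prod.snd_sub]
        abel
      rw [e]; exact map_add_le_add _ _ _
    rw [hB, hA]
    have hw1 : (w - u).1 = w.1 - u.1 := rfl
    have hw2 : (w - u).2 = w.2 - u.2 := rfl
    rw [hw1, hw2]
    linarith
  have hq_ub : ∀ k, k < l → ∀ x, q k (f x) ≤ r k (g x) + c * p k x := by
    intro k hk x
    have h1 := (hf k hk x).2
    have h2 := (hg k hk x).1
    have hp0 : 0 ≤ p k x := apply_nonneg _ _
    have h3 := mul_le_mul_of_nonneg_right hkey hp0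
    rw [add_mul, add_mul] at h3
    linarith
  have hr_ub : ∀ k, k < l → ∀ x, r k (g x) ≤ q k (f x) + c * p k x := by
    intro k hk x
    have h1 := (hg k hk x).2
    have h2 := (hf k hk x).1
    have hp0 : 0 ≤ p k x := apply_nonneg _ _
    have h3 := mul_le_mul_of_nonneg_right hkey hp0
    rw [add_mul, add_mul] at h3
    linarith
  have key1 : ∀ k, k < l → ∀ y : Y, sFam k (y, 0) = q k y := by
    intro k hk y
    rw [hs1 k hk]
    refine le_antisymm ?_ ?_
    · refine (hinfA k _).trans ?_
      rw [hA]
      simp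
    · rw [Seminorm.inf_apply]
      refine le_ciInf fun u => ?_
      refine le_trans ?_ (haux k hk (y, 0) u)
      have h3 : q k y ≤ q k (y - f (π u)) + q k (f (π u)) := by
        have e : y = (y - f (π u)) + f (π u) := by abel
        nth_rewrite 1 [e]
        exact map_add_le_add _ _ _
      have h4 := hq_ub k hk (π u)
      have h5 : r k ((0:Z) + g (π u)) = r k (g (π u)) := by rw [zero_add]
      show q k y ≤ c * p k (π u) + (q k (y - f (π u)) + r k ((0:Z) + g (π u)))
      linarith
  have key2 : ∀ k, k < l → ∀ z : Z, sFam k (0, z) = r k z := by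
    intro k hk z
    rw [hs1 k hk]
    refine le_antisymm ?_ ?_
    · refine (hinfA k _).trans ?_
      rw [hA]
      simp
    · rw [Seminorm.inf_apply]
      refine le_ciInf fun u => ?_
      refine le_trans ?_ (haux k hk (0, z) u)
      have h3 : r k z ≤ r k (z + g (π u)) + r k (g (π u)) := by
        have e : z = (z + g (π u)) + -(g (π u)) := by abel
        nth_rewrite 1 [e]
        exact (map_add_le_add _ _ _).trans (by rw [map_neg_eq_map])
      have h4 := hr_ub k hk (π u)
      have h5 : q k ((0:Y) - f (π u)) = q k (f (π u)) := by
        rw [zero_sub, map_neg_eq_map]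
      show r k z ≤ c * p k (π u) + (q k ((0:Y) - f (π u)) + r k (z + g (π u)))
      linarith
  have key3 : ∀ k, k < l → ∀ x, sFam k (f x, -(g x)) ≤ c * p k x := by
    intro k hk x
    rw [hs1 k hk]
    refine (hinfB k _).trans ?_
    have e : ((f x, -(g x)) : Y × Z) = D x := (hD x).symm
    rw [e, hB, hπD, sub_self, map_zero, mul_zero, add_zero]
  have key1' : ∀ k, l ≤ k → k < m → ∀ y : Y, sFam k (y, 0) = q k y := by
    intro k hk hk' y
    rw [hs2 k hk (by omega)]
    have e : min k (m - 1) = k := by omega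
    simp [hG_def, Seminorm.add_apply, Seminorm.comp_apply, e]
  have key2' : ∀ k, l ≤ k → k < m' → ∀ z : Z, sFam k (0, z) = r k z := by
    intro k hk hk' z
    rw [hs2 k hk hk']
    simp [hG_def, Seminorm.add_apply, Seminorm.comp_apply]
  have hGmono : (∀ k, k + 1 < m → ∀ y, q k y ≤ q (k + 1) y) →
      ∀ k (y : Y), G k y ≤ G (k + 1) y := by
    intro hq k y
    simp only [hG_def]
    by_cases h : k + 1 ≤ m - 1
    · have e1 : min k (m - 1) = k := by omega
      have e2 : min (k + 1) (m - 1) = k + 1 := by omega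
      rw [e1, e2]
      exact hq k (by omega) y
    · have e1 : min k (m - 1) = m - 1 := by omega
      have e2 : min (k + 1) (m - 1) = m - 1 := by omega
      rw [e1, e2]
  -- monotonicity of the family, assuming gradedness
  have hsmono : (∀ k, k + 1 < l → ∀ x, p k x ≤ p (k + 1) x) →
      (∀ k, k + 1 < m → ∀ y, q k y ≤ q (k + 1) y) →
      (∀ k, k + 1 < m' → ∀ z, r k z ≤ r (k + 1) z) →
      ∀ k, k + 1 ≤ m' → ∀ v : Y × Z, sFam k v ≤ sFam (k + 1) v := by
    intro hp hq hr k hk' v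
    rcases eq_or_lt_of_le hk' with heq | hlt
    · rw [hs3 (k + 1) heq.ge]
      have h1 : sFam k v ≤ K * N v := hTop k (by omega) v
      have hval : ((K.toNNReal + 1) • N) v = (K + 1) * N v := by
        rw [Seminorm.smul_apply, NNReal.smul_def, smul_eq_mul, NNReal.coe_add,
          Real.coe_toNNReal K hK0, NNReal.coe_one]
      rw [hval]
      have hN0 : 0 ≤ N v := apply_nonneg _ _
      nlinarith
    · by_cases hkl : k + 1 < l
      · rw [hs1 k (by omega), hs1 (k + 1) hkl, Seminorm.inf_apply, Seminorm.inf_apply]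
        refine ciInf_mono Seminorm.bddBelow_range_add fun u => ?_
        refine add_le_add ?_ ?_
        · rw [hB, hB]
          have h1 := mul_le_mul_of_nonneg_left (hp k hkl (π u)) hc0
          linarith
        · rw [hA, hA]
          exact add_le_add (hq k (by omega) _) (hr k (by omega) _)
      · by_cases hkl2 : k < l
        · rw [hs1 k hkl2, hs2 (k + 1) (by omega) hlt]
          refine (hinfA k v).trans ?_
          rw [hA, Seminorm.add_apply, Seminorm.comp_apply, Seminorm.comp_apply]
          have hGk : q k v.1 ≤ G (k + 1) v.1 := by
            have e1 : min k (m - 1) = k := by omega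
            have h := hGmono hq k v.1
            simp only [hG_def, e1] at h
            exact h
          exact add_le_add hGk (hr k (by omega) v.2)
        · rw [hs2 k (by omega) (by omega), hs2 (k + 1) (by omega) hlt,
            Seminorm.add_apply, Seminorm.add_apply, Seminorm.comp_apply,
            Seminorm.comp_apply, Seminorm.comp_apply, Seminorm.comp_apply]
          exact add_le_add (hGmono hq k v.1) (hr k (by omega) v.2)
  -- package everything up
  set n := Module.finrank ℝ (Y × Z) with hn_def
  set e : (Y × Z) ≃ₗ[ℝ] (Fin n → ℝ) := (Module.finBasis ℝ (Y × Z)).equivFun with he_def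
  refine ⟨⟨Fin n → ℝ, fun k => (sFam k).comp e.symm.toLinearMap⟩, m' + 1, inferInstance,
    by omega, ?_, ?_⟩
  · -- separating
    intro w hw
    refine ⟨m', by omega, ?_⟩
    show ((sFam m').comp e.symm.toLinearMap) w ≠ 0
    rw [Seminorm.comp_apply, hs3 m' le_rfl]
    have hw' : e.symm w ≠ 0 := (LinearEquiv.map_ne_zero_iff e.symm).mpr hw
    have hpos := hNpos _ hw'
    have hval : ((K.toNNReal + 1) • N) (e.symm.toLinearMap w)
        = (K + 1) * N (e.symm.toLinearMap w) := by
      rw [Seminorm.smul_apply, NNReal.smul_def, smul_eq_mul, NNReal.coe_add,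
        Real.coe_toNNReal K hK0, NNReal.coe_one]
    rw [hval]
    have : (0:ℝ) < (K + 1) * N (e.symm w) := mul_pos (by linarith) hpos
    exact ne_of_gt this
  · refine ⟨e.toLinearMap ∘ₗ LinearMap.inl ℝ Y Z, e.toLinearMap ∘ₗ LinearMap.inr ℝ Y Z,
      ?_, ?_, ?_, ?_, ?_, ?_⟩
    · rw [LinearMap.coe_comp, LinearEquiv.coe_coe]
      exact e.injective.comp LinearMap.inl_injective
    · rw [LinearMap.coe_comp, LinearEquiv.coe_coe]
      exact e.injective.comp LinearMap.inr_injective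
    · intro k hk y
      show ((sFam k).comp e.symm.toLinearMap) (e (y, 0)) = q k y
      rw [Seminorm.comp_apply]
      simp only [LinearEquiv.coe_coe, LinearEquiv.symm_apply_apply]
      by_cases hkl : k < l
      · exact key1 k hkl y
      · exact key1' k (by omega) hk y
    · intro k hk z
      show ((sFam k).comp e.symm.toLinearMap) (e (0, z)) = r k z
      rw [Seminorm.comp_apply]
      simp only [LinearEquiv.coe_coe, LinearEquiv.symm_apply_apply]
      by_cases hkl : k < l
      · exact key2 k hkl z
      · exact key2' k (by omega) hk z
    · intro k hk x hx
      have hd : (e.toLinearMap ∘ₗ LinearMap.inl ℝ Y Z) (f x)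
          - (e.toLinearMap ∘ₗ LinearMap.inr ℝ Y Z) (g x) = e (f x, -(g x)) := by
        rw [LinearMap.comp_apply, LinearMap.comp_apply, LinearMap.inl_apply,
          LinearMap.inr_apply]
        rw [show (e.toLinearMap) ((f x, 0) : Y × Z) - (e.toLinearMap) ((0, g x) : Y × Z)
          = e.toLinearMap (((f x, 0) : Y × Z) - ((0, g x) : Y × Z)) from (map_sub _ _ _).symm]
        rw [show ((f x, 0) : Y × Z) - ((0, g x) : Y × Z) = ((f x, -(g x)) : Y × Z) by
          rw [Prod.mk_sub_mk, sub_zero, zero_sub]]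
        rfl
      show ((sFam k).comp e.symm.toLinearMap) _ ≤ 2 * δ + ε
      rw [hd, Seminorm.comp_apply]
      simp only [LinearEquiv.coe_coe, LinearEquiv.symm_apply_apply]
      refine (key3 k hk x).trans ?_
      calc c * p k x ≤ c * 1 := mul_le_mul_of_nonneg_left hx hc0
        _ = c := mul_one c
        _ = 2 * δ + ε := hc_def
    · rintro ⟨hp, hq, hr⟩ k hk w
      show ((sFam k).comp e.symm.toLinearMap) w ≤ ((sFam (k + 1)).comp e.symm.toLinearMap) w
      rw [Seminorm.comp_apply, Seminorm.comp_apply]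
      exact hsmono hp hq hr k (by omega) (e.symm.toLinearMap w)
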